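/- For every complex number t with |t| ≤ 1, the rational map f_t(w) = w + t/(2w²) is injective on the region {w ∈ ℂ : |w| > 1}. -/

import Mathlib

/-- For every complex number `t` with `|t| ≤ 1`, the rational map
`f_t(w) = w + t / (2 w²)` is injective on the region `{w : ℂ | |w| > 1}`. -/
theorem deltoid_family_injective (t : ℂ) (ht : ‖t‖ ≤ 1) :
    Set.InjOn (fun w : ℂ => w + t / (2 * w ^ 2)) {w : ℂ | 1 < ‖w‖} := by
  intro a ha b hb heq
  simp only [Set.mem_setOf_eq] at ha hb heq
  by_contra hne
  have ha0 : a ≠ 0 := by intro h; rw [h] at ha; simp at ha; linarith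
  have hb0 : b ≠ 0 := by intro h; rw [h] at hb; simp at hb; linarith
  have h1 : (a + t / (2 * a ^ 2)) * (2 * a ^ 2 * b ^ 2)
      = (b + t / (2 * b ^ 2)) * (2 * a ^ 2 * b ^ 2) := by rw [heq]
  have h2 : (a - b) * (4 * a ^ 2 * b ^ 2) * (2 * a ^ 2 * b ^ 2)
      = (a - b) * (4 * a ^ 2 * b ^ 2) * (t * (a + b)) := by
    field_simp at h1
    linear_combination (4 * a ^ 2 * b ^ 2) * h1
  have hcz : (a - b) * (4 * a ^ 2 * b ^ 2) ≠ 0 := by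
    apply mul_ne_zero (sub_ne_zero.mpr hne)
    exact mul_ne_zero (mul_ne_zero (by norm_num) (pow_ne_zero _ ha0)) (pow_ne_zero _ hb0)
  have key : 2 * a ^ 2 * b ^ 2 = t * (a + b) :=
    mul_left_cancel₀ hcz h2
  have hnorm : ‖2 * a ^ 2 * b ^ 2‖ = ‖t * (a + b)‖ := by rw [key]
  have h3 : ‖t * (a + b)‖ ≤ ‖a‖ + ‖b‖ := by
    rw [norm_mul]
    calc ‖t‖ * ‖a + b‖ ≤ 1 * ‖a + b‖ := by
          apply mul_le_mul_of_nonneg_right ht (norm_nonneg _)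
      _ = ‖a + b‖ := one_mul _
      _ ≤ ‖a‖ + ‖b‖ := norm_add_le _ _
  have h4 : ‖2 * a ^ 2 * b ^ 2‖ = 2 * ‖a‖ ^ 2 * ‖b‖ ^ 2 := by
    simp [norm_mul, norm_pow]
  rw [h4] at hnorm
  nlinarith [hnorm, h3, ha, hb, sq_nonneg (‖a‖ - 1), sq_nonneg (‖b‖ - 1), mul_pos (norm_pos_iff.mpr ha0) (norm_pos_iff.mpr hb0)]
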